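/- Let G be a finite directed acyclic graph in which every ST-path consists of a single edge from a source to a target (a 'direct' network). Then for every vertex set R ⊆ V, the number of vertices of V_ST with φ_R(v) = 0 is at most 2·(P − |P_R|), twice the number of ST-paths not covered by R. -/

import Mathlib

/-!
Common setup: a finite directed acyclic graph is a finite vertex type `V`
with an edge relation `E : V → V → Prop` such that no vertex can reach
itself by a nonempty directed walk (`DAG`).
A directed path/walk is a nonempty list of vertices in which consecutive
vertices are joined by edges (a single-vertex path is allowed).
-/

variable {V : Type*}

/-- Acyclicity: no vertex reaches itself by a nonempty directed walk. -/
def DAG (E : V → V → Prop) : Prop := ∀ v : V, ¬ Relation.TransGen E v v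

/-- A source: a vertex with no incoming edges. -/
def IsSource (E : V → V → Prop) (v : V) : Prop := ∀ u, ¬ E u v

/-- A target: a vertex with no outgoing edges. -/
def IsTarget (E : V → V → Prop) (v : V) : Prop := ∀ u, ¬ E v u

/-- A directed walk/path: a nonempty list of vertices joined by consecutive edges. -/
def IsWalk (E : V → V → Prop) (p : List V) : Prop := p ≠ [] ∧ p.Chain' E

/-- A directed path from `a` to `b`. -/
def PathFrom (E : V → V → Prop) (a b : V) (p : List V) : Prop :=
  IsWalk E p ∧ p.head? = some a ∧ p.getLast? = some b

/-- An ST-path: a directed path from some source to some target. -/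
def IsSTPath (E : V → V → Prop) (p : List V) : Prop :=
  ∃ s t, IsSource E s ∧ IsTarget E t ∧ PathFrom E s t p

/-- The set of all ST-paths. -/
def STPaths (E : V → V → Prop) : Set (List V) := {p | IsSTPath E p}

/-- Path centrality `P(v)`: the number of ST-paths traversing `v`. -/
noncomputable def pathCentrality (E : V → V → Prop) (v : V) : ℕ :=
  {p : List V | IsSTPath E p ∧ v ∈ p}.ncard

/-- `P_S(v)`: the number of directed paths from some source to `v`. -/
noncomputable def PS (E : V → V → Prop) (v : V) : ℕ :=
  {p : List V | ∃ s, IsSource E s ∧ PathFrom E s v p}.ncard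

/-- `P_T(v)`: the number of directed paths from `v` to some target. -/
noncomputable def PT (E : V → V → Prop) (v : V) : ℕ :=
  {p : List V | ∃ t, IsTarget E t ∧ PathFrom E v t p}.ncard

/-- `P_R`: the set of ST-paths traversing at least one vertex of `R`. -/
def coveredPaths (E : V → V → Prop) (R : Set V) : Set (List V) :=
  {p | IsSTPath E p ∧ ∃ v ∈ R, v ∈ p}

/-- in a 'direct' network, in which every ST-path is a single
edge from a source to a target, the number of vertices of `V_ST` with
`φ_R(v) = 0` is at most twice the number of ST-paths not covered by `R`. -/
theorem direct_network_tendril_bound [Fintype V] (E : V → V → Prop) (hE : DAG E)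
    (hdirect : ∀ p : List V, IsSTPath E p →
      ∃ s t, IsSource E s ∧ IsTarget E t ∧ E s t ∧ p = [s, t])
    (R : Set V) :
    {v : V | (∃ p : List V, IsSTPath E p ∧ v ∈ p) ∧
        ¬ ∃ w ∈ R, (∃ q, PathFrom E v w q) ∨ (∃ q, PathFrom E w v q)}.ncard ≤
      2 * ((STPaths E).ncard - (coveredPaths E R).ncard) := by
  classical
  set Bad : Set V := {v : V | (∃ p : List V, IsSTPath E p ∧ v ∈ p) ∧
        ¬ ∃ w ∈ R, (∃ q, PathFrom E v w q) ∨ (∃ q, PathFrom E w v q)} with hBad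
  set U : Set (List V) := STPaths E \ coveredPaths E R with hU
  have hSTfin : (STPaths E).Finite := by
    apply Set.Finite.subset ((Set.finite_univ (α := V × V)).image (fun st => [st.1, st.2]))
    intro p hp
    obtain ⟨s, t, _, _, _, hp2⟩ := hdirect p hp
    exact ⟨(s, t), trivial, hp2.symm⟩
  have hUfin : U.Finite := hSTfin.diff
  have hkey : ∀ v ∈ Bad, ∃ p ∈ U, p.head? = some v ∨ p.getLast? = some v := by
    intro v hv
    obtain ⟨⟨p, hp, hvp⟩, hno⟩ := hv
    obtain ⟨s, t, hs, ht, hst, rfl⟩ := hdirect p hp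
    have hpU : [s, t] ∈ U := by
      refine ⟨hp, ?_⟩
      rintro ⟨-, w, hwR, hwp⟩
      apply hno
      have hself : ∀ u : V, PathFrom E u u [u] :=
        fun u => ⟨⟨by simp, List.isChain_singleton u⟩, by simp, by simp⟩
      have hpath : PathFrom E s t [s, t] :=
        ⟨⟨by simp, List.isChain_pair.mpr hst⟩, by simp, by simp⟩
      simp only [List.mem_cons, List.mem_singleton, List.not_mem_nil, or_false] at hwp hvp
      rcases hvp with hv1 | hv1 <;> rcases hwp with hw1 | hw1
      · exact ⟨w, hwR, Or.inl ⟨[v], by rw [hv1, hw1]; exact hself s⟩⟩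
      · exact ⟨w, hwR, Or.inl ⟨[s, t], by rw [hv1, hw1]; exact hpath⟩⟩
      · exact ⟨w, hwR, Or.inr ⟨[s, t], by rw [hv1, hw1]; exact hpath⟩⟩
      · exact ⟨w, hwR, Or.inl ⟨[v], by rw [hv1, hw1]; exact hself t⟩⟩
    refine ⟨[s, t], hpU, ?_⟩
    simp only [List.mem_cons, List.mem_singleton, List.not_mem_nil, or_false] at hvp
    rcases hvp with rfl | rfl
    · exact Or.inl (by simp)
    · exact Or.inr (by simp)
  have hsub : (some '' Bad : Set (Option V)) ⊆
      (fun p : List V => p.head?) '' U ∪ (fun p : List V => p.getLast?) '' U := by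
    rintro _ ⟨v, hv, rfl⟩
    obtain ⟨p, hpU, h | h⟩ := hkey v hv
    · exact Or.inl ⟨p, hpU, h⟩
    · exact Or.inr ⟨p, hpU, h⟩
  have h1 : Bad.ncard = (some '' Bad : Set (Option V)).ncard :=
    (Set.ncard_image_of_injective Bad (Option.some_injective V)).symm
  have h2 : (some '' Bad : Set (Option V)).ncard ≤
      ((fun p : List V => p.head?) '' U ∪ (fun p : List V => p.getLast?) '' U).ncard :=
    Set.ncard_le_ncard hsub ((hUfin.image _).union (hUfin.image _))
  have h3 : ((fun p : List V => p.head?) '' U ∪ (fun p : List V => p.getLast?) '' U).ncard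
      ≤ U.ncard + U.ncard :=
    le_trans (Set.ncard_union_le _ _)
      (add_le_add (Set.ncard_image_le hUfin) (Set.ncard_image_le hUfin))
  have hcov : coveredPaths E R ⊆ STPaths E := fun p hp => hp.1
  have h4 : U.ncard = (STPaths E).ncard - (coveredPaths E R).ncard :=
    Set.ncard_diff hcov (hSTfin.subset hcov)
  calc Bad.ncard ≤ U.ncard + U.ncard := h1 ▸ le_trans h2 h3
    _ = 2 * U.ncard := (two_mul _).symm
    _ = 2 * ((STPaths E).ncard - (coveredPaths E R).ncard) := by rw [h4]
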